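/- Let W*₀ be the smallest value in 𝒲 = {W(y|x) : x,y ∈ ℝ², dist(x,y) ≥ R} such that I(W*₀) is nonempty. Then a point x is a (1|1)_R-centroid (i.e., minimizes W*) if and only if x ∈ I(W*₀). -/

import Mathlib

open scoped RealInnerProductSpace

noncomputable section

/-- The Euclidean plane. -/
abbrev Plane := EuclideanSpace ℝ (Fin 2)

/-- The point of the plane with coordinates `(a, b)`. -/
def pt (a b : ℝ) : Plane := (WithLp.equiv 2 (Fin 2 → ℝ)).symm ![a, b]

/-- `Wcap V w x y` = total weight of customers in `V` strictly closer to `y` than to `x`. -/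
def Wcap (V : Finset Plane) (w : Plane → ℝ) (x y : Plane) : ℝ :=
  ∑ v ∈ V, if dist v y < dist v x then w v else 0

/-- `Wstar V w R x` = the weight loss of `x`: the supremum of captures over feasible
follower positions `y` with `dist x y ≥ R`. -/
def Wstar (V : Finset Plane) (w : Plane → ℝ) (R : ℝ) (x : Plane) : ℝ :=
  sSup (Wcap V w x '' {y : Plane | R ≤ dist x y})

/-- Unit direction of polar angle `θ`. -/
def dir (θ : ℝ) : Plane := pt (Real.cos θ) (Real.sin θ)

/-- `Wang V w R x θ` = capture of the follower placed at `x + R•(cos θ, sin θ)` against `x`. -/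
def Wang (V : Finset Plane) (w : Plane → ℝ) (R : ℝ) (x : Plane) (θ : ℝ) : ℝ :=
  Wcap V w x (x + R • dir θ)

/-- The weight loss of `x`, as the supremum of captures over the circle of radius `R`. -/
def WstarC (V : Finset Plane) (w : Plane → ℝ) (R : ℝ) (x : Plane) : ℝ :=
  sSup (Set.range (Wang V w R x))

/-- The intersection `I(W₀)` of the convex hulls `CH(𝒞(S))` over subsets `S ⊆ V`
with `W(S) ≥ W₀`. -/
def Iset (V : Finset Plane) (w : Plane → ℝ) (R W₀ : ℝ) : Set Plane :=
  ⋂ S ∈ {S : Finset Plane | S ⊆ V ∧ W₀ ≤ ∑ v ∈ S, w v},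
    convexHull ℝ (⋃ v ∈ S, Metric.closedBall v (R / 2))

open Pointwise

lemma norm_dir (θ : ℝ) : ‖dir θ‖ = 1 := by
  rw [dir, pt, EuclideanSpace.norm_eq]
  simp [Fin.sum_univ_two, Real.norm_eq_abs, sq_abs, Real.cos_sq_add_sin_sq]

lemma dist_dirpt (R : ℝ) (hR : 0 ≤ R) (x : Plane) : dist x (x + R • dir 0) = R := by
  rw [dist_self_add_right, norm_smul, norm_dir]
  simp [abs_of_nonneg hR]

lemma wcap_nonneg {V : Finset Plane} {w : Plane → ℝ} (hw : ∀ v ∈ V, 0 < w v) (x y : Plane) :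
    0 ≤ Wcap V w x y :=
  Finset.sum_nonneg fun v hv => by
    split_ifs
    · exact (hw v hv).le
    · exact le_rfl

lemma wcap_le_total {V : Finset Plane} {w : Plane → ℝ} (hw : ∀ v ∈ V, 0 < w v) (x y : Plane) :
    Wcap V w x y ≤ ∑ v ∈ V, w v :=
  Finset.sum_le_sum fun v hv => by
    split_ifs
    · exact le_rfl
    · exact (hw v hv).le

lemma wcap_eq_filter (V : Finset Plane) (w : Plane → ℝ) (x y : Plane) :
    Wcap V w x y = ∑ v ∈ V.filter (fun v => dist v y < dist v x), w v :=
  (Finset.sum_filter _ _).symm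

lemma wstar_bdd {V : Finset Plane} {w : Plane → ℝ} (hw : ∀ v ∈ V, 0 < w v) (R : ℝ) (x : Plane) :
    BddAbove (Wcap V w x '' {y : Plane | R ≤ dist x y}) := by
  refine ⟨∑ v ∈ V, w v, ?_⟩
  rintro a ⟨y, _, rfl⟩
  exact wcap_le_total hw x y

lemma le_wstar {V : Finset Plane} {w : Plane → ℝ} (hw : ∀ v ∈ V, 0 < w v) {R : ℝ} {x y : Plane}
    (hy : R ≤ dist x y) : Wcap V w x y ≤ Wstar V w R x :=
  le_csSup (wstar_bdd hw R x) ⟨y, hy, rfl⟩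

lemma wstar_attained {V : Finset Plane} (w : Plane → ℝ) {R : ℝ}
    (hR : 0 < R) (x : Plane) :
    ∃ y : Plane, R ≤ dist x y ∧ Wstar V w R x = Wcap V w x y := by
  have hne : (Wcap V w x '' {y : Plane | R ≤ dist x y}).Nonempty :=
    ⟨_, ⟨x + R • dir 0, by rw [Set.mem_setOf_eq, dist_dirpt R hR.le], rfl⟩⟩
  have hfin : (Wcap V w x '' {y : Plane | R ≤ dist x y}).Finite := by
    apply Set.Finite.subset (Finset.finite_toSet (V.powerset.image fun S => ∑ v ∈ S, w v))
    rintro a ⟨y, _, rfl⟩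
    simp only [Finset.coe_image, Set.mem_image, Finset.mem_coe, Finset.mem_powerset]
    exact ⟨V.filter (fun v => dist v y < dist v x), Finset.filter_subset _ _,
      (wcap_eq_filter V w x y).symm⟩
  obtain ⟨y, hy, h⟩ := hne.csSup_mem hfin
  exact ⟨y, hy, h.symm⟩

lemma wstar_nonneg {V : Finset Plane} {w : Plane → ℝ} (hw : ∀ v ∈ V, 0 < w v) {R : ℝ}
    (hR : 0 < R) (x : Plane) : 0 ≤ Wstar V w R x :=
  le_trans (wcap_nonneg hw x (x + R • dir 0))
    (le_wstar hw (by rw [dist_dirpt R hR.le]))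

lemma dist_lt_iff_inner {v x y : Plane} :
    dist v y < dist v x ↔ ‖y - x‖ ^ 2 / 2 < ⟪y - x, v - x⟫ := by
  rw [dist_eq_norm, dist_eq_norm]
  have h1 : v - y = (v - x) - (y - x) := by abel
  constructor
  · intro h
    have h2 : ‖v - y‖ ^ 2 < ‖v - x‖ ^ 2 := by
      apply pow_lt_pow_left₀ h (norm_nonneg _)
      norm_num
    rw [h1, norm_sub_sq_real] at h2
    rw [real_inner_comm]
    nlinarith
  · intro h
    have h2 : ‖v - y‖ ^ 2 < ‖v - x‖ ^ 2 := by
      rw [h1, norm_sub_sq_real]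
      rw [real_inner_comm] at h
      nlinarith
    exact lt_of_pow_lt_pow_left₀ 2 (norm_nonneg _) h2

/-- If `y` at distance `≥ R` captures all points of `T`, then `x` is not in the convex hull
of the disks of radius `R/2` around points of `T`. -/
lemma capture_not_mem {R : ℝ} (hR : 0 < R) {x y : Plane} (hy : R ≤ dist x y) (T : Finset Plane)
    (hT : ∀ v ∈ T, dist v y < dist v x) :
    x ∉ convexHull ℝ (⋃ v ∈ T, Metric.closedBall v (R / 2)) := by
  set u := y - x with hu
  have hnu : R ≤ ‖u‖ := by rw [hu, ← dist_eq_norm, dist_comm]; exact hy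
  have hupos : 0 < ‖u‖ := lt_of_lt_of_le hR hnu
  have hsub : convexHull ℝ (⋃ v ∈ T, Metric.closedBall v (R / 2)) ⊆ {p | 0 < ⟪u, p - x⟫} := by
    apply convexHull_min
    · rintro p hp
      simp only [Set.mem_iUnion, Metric.mem_closedBall] at hp
      obtain ⟨v, hv, hpv⟩ := hp
      have h1 : ‖u‖ ^ 2 / 2 < ⟪u, v - x⟫ := dist_lt_iff_inner.mp (hT v hv)
      have h2 : |⟪u, p - v⟫| ≤ ‖u‖ * ‖p - v‖ := abs_real_inner_le_norm u (p - v)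
      have h3 : ‖p - v‖ ≤ R / 2 := by rwa [← dist_eq_norm]
      have h4 : ⟪u, p - x⟫ = ⟪u, v - x⟫ + ⟪u, p - v⟫ := by
        rw [← inner_add_right]
        congr 1
        abel
      have h5 : -(‖u‖ * (R / 2)) ≤ ⟪u, p - v⟫ := by
        have := neg_abs_le ⟪u, p - v⟫
        nlinarith
      show 0 < ⟪u, p - x⟫
      rw [h4]
      nlinarith
    · have : {p : Plane | 0 < ⟪u, p - x⟫} = {p : Plane | ⟪u, x⟫ < ⟪u, p⟫} := by
        ext p
        simp [inner_sub_right, sub_pos]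
      rw [this]
      exact convex_halfSpace_gt
        ⟨fun a b => inner_add_right u a b, fun c a => real_inner_smul_right u a c⟩ _
  intro hmem
  have := hsub hmem
  simp at this

/-- If `x` is not in the convex hull of the disks of radius `R/2` around points of `S`,
then some `y` at distance `R` from `x` captures all of `S`. -/
lemma exists_capture {R : ℝ} (hR : 0 < R) (S : Finset Plane) (x : Plane)
    (hx : x ∉ convexHull ℝ (⋃ v ∈ S, Metric.closedBall v (R / 2))) :
    ∃ y : Plane, dist x y = R ∧ ∀ v ∈ S, dist v y < dist v x := by
  rcases S.eq_empty_or_nonempty with rfl | ⟨v₀, hv₀⟩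
  · exact ⟨x + R • dir 0, dist_dirpt R hR.le x, by simp⟩
  · set C := convexHull ℝ (⋃ v ∈ S, Metric.closedBall v (R / 2)) with hC
    have hcpt : IsCompact C := by
      have h1 : (⋃ v ∈ S, Metric.closedBall v (R / 2))
          = (S : Set Plane) + Metric.closedBall 0 (R / 2) := by
        ext p
        simp only [Set.mem_iUnion, Metric.mem_closedBall, Set.mem_add, Finset.mem_coe]
        constructor
        · rintro ⟨v, hv, hpv⟩
          exact ⟨v, hv, p - v, by simpa [dist_eq_norm, dist_comm] using hpv, by abel⟩
        · rintro ⟨v, hv, b, hb, rfl⟩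
          exact ⟨v, hv, by simpa [dist_eq_norm] using hb⟩
      rw [hC, h1, convexHull_add, (convex_closedBall _ _).convexHull_eq]
      exact (S.finite_toSet.isCompact_convexHull (𝕜 := ℝ)).add (isCompact_closedBall _ _)
    have hconv : Convex ℝ C := convex_convexHull _ _
    obtain ⟨f, c, hfx, hfC⟩ := geometric_hahn_banach_point_closed hconv hcpt.isClosed hx
    set z := (InnerProductSpace.toDual ℝ Plane).symm f with hz
    have hfz : ∀ p : Plane, f p = ⟪z, p⟫ := fun p =>
      (InnerProductSpace.toDual_symm_apply).symm
    have hv₀C : (v₀ : Plane) ∈ C := by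
      apply subset_convexHull
      exact Set.mem_biUnion hv₀ (Metric.mem_closedBall_self (by linarith))
    have hzne : z ≠ 0 := by
      intro h
      have h1 := hfC v₀ hv₀C
      rw [hfz v₀, h, inner_zero_left] at h1
      rw [hfz x, h, inner_zero_left] at hfx
      linarith
    have hnz : 0 < ‖z‖ := norm_pos_iff.mpr hzne
    set e := ‖z‖⁻¹ • z with he
    have hne : ‖e‖ = 1 := by
      rw [he, norm_smul, norm_inv, norm_norm, inv_mul_cancel₀ hnz.ne']
    refine ⟨x + R • e, ?_, ?_⟩
    · rw [dist_self_add_right, norm_smul, hne, Real.norm_eq_abs, abs_of_nonneg hR.le, mul_one]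
    · intro v hv
      have hp : (v - (R / 2) • e) ∈ C := by
        apply subset_convexHull
        refine Set.mem_biUnion hv ?_
        rw [Metric.mem_closedBall, dist_eq_norm]
        simp only [sub_sub_cancel_left, norm_neg]
        rw [norm_smul, hne, Real.norm_eq_abs, abs_of_nonneg (by linarith : (0:ℝ) ≤ R/2), mul_one]
      have h1 := hfC _ hp
      rw [hfz] at h1
      rw [hfz] at hfx
      have h2 : ⟪z, v - (R/2) • e⟫ = ⟪z, v⟫ - (R/2) * ‖z‖ := by
        rw [inner_sub_right, real_inner_smul_right, he, real_inner_smul_right,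
          real_inner_self_eq_norm_sq]
        field_simp
      have hkey : R / 2 * ‖z‖ < ⟪z, v - x⟫ := by
        rw [inner_sub_right]
        rw [h2] at h1
        linarith
      have hkey' : R / 2 < ⟪e, v - x⟫ := by
        rw [he, real_inner_smul_left]
        have h4 := mul_lt_mul_of_pos_left hkey (inv_pos.mpr hnz)
        have h5 : ‖z‖⁻¹ * ‖z‖ = 1 := inv_mul_cancel₀ hnz.ne'
        nlinarith
      have hd : dist v (x + R • e) ^ 2 < dist v x ^ 2 := by
        rw [dist_eq_norm, dist_eq_norm]
        have : v - (x + R • e) = (v - x) - R • e := by abel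
        rw [this, norm_sub_sq_real, real_inner_smul_right, norm_smul, Real.norm_eq_abs,
          abs_of_nonneg hR.le, hne, mul_one, real_inner_comm e (v - x)]
        nlinarith [mul_lt_mul_of_pos_left hkey' hR]
      exact lt_of_pow_lt_pow_left₀ 2 dist_nonneg hd

/-- Key characterization: `x ∈ I(W')` iff the weight loss of `x` is strictly below `W'`. -/
lemma mem_iset_iff {V : Finset Plane} {w : Plane → ℝ} (hw : ∀ v ∈ V, 0 < w v) {R : ℝ}
    (hR : 0 < R) (W' : ℝ) (x : Plane) :
    x ∈ Iset V w R W' ↔ Wstar V w R x < W' := by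
  constructor
  · intro hx
    obtain ⟨y, hy, hEq⟩ := wstar_attained w hR x
    set T := V.filter (fun v => dist v y < dist v x) with hT
    have hnotmem : x ∉ convexHull ℝ (⋃ v ∈ T, Metric.closedBall v (R / 2)) :=
      capture_not_mem hR hy T (fun v hv => (Finset.mem_filter.mp hv).2)
    by_contra hcon
    push_neg at hcon
    have hWT : W' ≤ ∑ v ∈ T, w v := by
      rw [← wcap_eq_filter, ← hEq]
      exact hcon
    have : x ∈ convexHull ℝ (⋃ v ∈ T, Metric.closedBall v (R / 2)) := by
      have := Set.mem_iInter₂.mp hx T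
      exact this ⟨Finset.filter_subset _ _, hWT⟩
    exact hnotmem this
  · intro h
    rw [Iset]
    refine Set.mem_iInter₂.mpr fun S hS => ?_
    obtain ⟨hSV, hWS⟩ := hS
    by_contra hx
    obtain ⟨y, hyd, hcap⟩ := exists_capture hR S x hx
    have h1 : ∑ v ∈ S, w v ≤ Wcap V w x y := by
      rw [Wcap]
      calc ∑ v ∈ S, w v
          = ∑ v ∈ S, (if dist v y < dist v x then w v else 0) :=
            Finset.sum_congr rfl fun v hv => (if_pos (hcap v hv)).symm
        _ ≤ ∑ v ∈ V, (if dist v y < dist v x then w v else 0) := by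
            apply Finset.sum_le_sum_of_subset_of_nonneg hSV
            intro v hv _
            split_ifs
            · exact (hw v hv).le
            · exact le_rfl
    have h2 : Wcap V w x y ≤ Wstar V w R x := le_wstar hw (le_of_eq hyd.symm)
    linarith

/-- for the smallest attainable capture value `W₀` with `I(W₀)` nonempty,
a point is a `(1|1)_R`-centroid iff it belongs to `I(W₀)`. -/
theorem stmt_5 (V : Finset Plane) (w : Plane → ℝ) (hw : ∀ v ∈ V, 0 < w v)
    (R : ℝ) (hR : 0 < R) (W₀ : ℝ)
    (hmem : W₀ ∈ {c : ℝ | ∃ x y : Plane, R ≤ dist x y ∧ c = Wcap V w x y})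
    (hne : (Iset V w R W₀).Nonempty)
    (hmin : ∀ W' ∈ {c : ℝ | ∃ x y : Plane, R ≤ dist x y ∧ c = Wcap V w x y},
      (Iset V w R W').Nonempty → W₀ ≤ W')
    (x : Plane) :
    (∀ x' : Plane, Wstar V w R x ≤ Wstar V w R x') ↔ x ∈ Iset V w R W₀ := by
  obtain ⟨x₀, hx₀⟩ := hne
  have hx₀lt : Wstar V w R x₀ < W₀ := (mem_iset_iff hw hR W₀ x₀).mp hx₀
  constructor
  · intro hmin'
    exact (mem_iset_iff hw hR W₀ x).mpr (lt_of_le_of_lt (hmin' x₀) hx₀lt)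
  · intro hx x'
    have hxlt : Wstar V w R x < W₀ := (mem_iset_iff hw hR W₀ x).mp hx
    by_contra hcon
    push_neg at hcon
    -- x' has strictly smaller loss; then Iset (Wstar x) is nonempty and Wstar x is attainable
    have hatt : Wstar V w R x ∈ {c : ℝ | ∃ x y : Plane, R ≤ dist x y ∧ c = Wcap V w x y} := by
      obtain ⟨y, hy, hEq⟩ := wstar_attained w hR x
      exact ⟨x, y, hy, hEq⟩
    have hne' : (Iset V w R (Wstar V w R x)).Nonempty :=
      ⟨x', (mem_iset_iff hw hR _ x').mpr hcon⟩
    have := hmin _ hatt hne'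
    linarith
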